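/- Let n = p_1^{α_1} ⋯ p_s^{α_s} with s ≥ 2 distinct primes. If t ≤ (n+1)/(2^{s+1}√(2s−1) + 1), then φ_{⌊n/t⌋}(n) ≥ φ(n)/(2.2·t). -/

import Mathlib

/-- Legendre's totient function φ_m(n): the number of a ∈ [1,m] coprime to n. -/
def legendrePhi (m n : ℕ) : ℕ :=
  ((Finset.Icc 1 m).filter fun a => Nat.Coprime a n).card

open Finset

lemma legendre_eq (m n : ℕ) (hn : 0 < n) :
    ((((Finset.Icc 1 m).filter fun a => Nat.Coprime a n).card : ℤ)) =
      ∑ T ∈ n.primeFactors.powerset, (-1) ^ T.card * ((m / ∏ p ∈ T, p : ℕ) : ℤ) := by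
  classical
  rw [Finset.card_filter]
  push_cast
  have key : ∀ a ∈ Finset.Icc 1 m,
      (if Nat.Coprime a n then (1:ℤ) else 0) =
      ∑ T ∈ n.primeFactors.powerset, (-1) ^ T.card * (if (∏ p ∈ T, p) ∣ a then 1 else 0) := by
    intro a ha
    set S' : Finset ℕ := n.primeFactors.filter (· ∣ a) with hS'
    have hsub : S' ⊆ n.primeFactors := Finset.filter_subset _ _
    have hdvd : ∀ T ∈ n.primeFactors.powerset, ((∏ p ∈ T, p) ∣ a ↔ T ⊆ S') := by
      intro T hT
      rw [Finset.mem_powerset] at hT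
      constructor
      · intro h p hp
        rw [hS', Finset.mem_filter]
        exact ⟨hT hp, dvd_trans (Finset.dvd_prod_of_mem _ hp) h⟩
      · intro h
        refine Finset.prod_primes_dvd a ?_ ?_
        · intro p hp
          exact (Nat.prime_iff.mp (Nat.prime_of_mem_primeFactors (hT hp)))
        · intro p hp
          exact (Finset.mem_filter.mp (h hp)).2
    calc (if Nat.Coprime a n then (1:ℤ) else 0)
        = (if S' = ∅ then 1 else 0) := by
          congr 1
          simp only [eq_iff_iff]
          constructor
          · intro hcop
            rw [Finset.eq_empty_iff_forall_notMem]
            intro p hp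
            rw [hS', Finset.mem_filter] at hp
            obtain ⟨hpS, hpa⟩ := hp
            have hpn := Nat.dvd_of_mem_primeFactors hpS
            have hp' := Nat.prime_of_mem_primeFactors hpS
            exact hp'.one_lt.ne' (Nat.eq_one_of_dvd_coprimes hcop hpa hpn)
          · intro hE
            by_contra hnc
            obtain ⟨p, hp, hpa, hpn⟩ := Nat.Prime.not_coprime_iff_dvd.mp hnc
            have : p ∈ S' := by
              rw [hS', Finset.mem_filter, Nat.mem_primeFactors]
              exact ⟨⟨hp, hpn, hn.ne'⟩, hpa⟩
            simp [hE] at this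
      _ = ∑ T ∈ n.primeFactors.powerset, (-1) ^ T.card * (if (∏ p ∈ T, p) ∣ a then 1 else 0) := by
          symm
          calc ∑ T ∈ n.primeFactors.powerset, (-1:ℤ) ^ T.card * (if (∏ p ∈ T, p) ∣ a then 1 else 0)
              = ∑ T ∈ n.primeFactors.powerset, (if T ⊆ S' then (-1:ℤ) ^ T.card else 0) := by
                refine Finset.sum_congr rfl fun T hT => ?_
                rw [mul_ite, mul_one, mul_zero, if_congr (hdvd T hT) rfl rfl]
            _ = ∑ T ∈ n.primeFactors.powerset.filter (· ⊆ S'), (-1:ℤ) ^ T.card :=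
                (Finset.sum_filter _ _).symm
            _ = ∑ T ∈ S'.powerset, (-1:ℤ) ^ T.card := by
                congr 1
                ext T
                simp only [Finset.mem_filter, Finset.mem_powerset]
                exact ⟨fun h => h.2, fun h => ⟨h.trans hsub, h⟩⟩
            _ = (if S' = ∅ then 1 else 0) := Finset.sum_powerset_neg_one_pow_card
  rw [Finset.sum_congr rfl key, Finset.sum_comm]
  refine Finset.sum_congr rfl fun T hT => ?_
  rw [← Finset.mul_sum]
  congr 1
  calc ∑ a ∈ Finset.Icc 1 m, (if (∏ p ∈ T, p) ∣ a then (1:ℤ) else 0)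
      = (((Finset.Icc 1 m).filter fun a => (∏ p ∈ T, p) ∣ a).card : ℤ) := by
        rw [Finset.sum_boole]
    _ = ((m / ∏ p ∈ T, p : ℕ) : ℤ) := by
        rw [show Finset.Icc 1 m = Finset.Ioc 0 m from by rw [← Finset.Icc_add_one_left_eq_Ioc]; rfl, Nat.Ioc_filter_dvd_card_eq_div]
    _ = (m : ℤ) / ∏ i ∈ T, (i : ℤ) := by
        push_cast [Int.natCast_ediv]
        rfl

lemma prime_max_ge (S : Finset ℕ) (hS : ∀ p ∈ S, Nat.Prime p) (h : S.Nonempty) :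
    2 * S.card ≤ S.max' h + 1 := by
  classical
  have hinj : Set.InjOn (fun p => (p + 1) / 2) S := by
    intro p hp q hq hpq
    have hp2 := (hS p hp).two_le
    have hq2 := (hS q hq).two_le
    have hpo := (hS p hp).eq_two_or_odd'
    have hqo := (hS q hq).eq_two_or_odd'
    simp only at hpq
    rcases hpo with h1 | h1 <;> rcases hqo with h2 | h2 <;>
      [skip; skip; skip; skip] <;>
      first
        | omega
        | (obtain ⟨a, ha⟩ := h1; obtain ⟨b, hb⟩ := h2; omega)
        | (obtain ⟨a, ha⟩ := h1; omega)
        | (obtain ⟨b, hb⟩ := h2; omega)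
  have himg : S.image (fun p => (p + 1) / 2) ⊆ Finset.Icc 1 ((S.max' h + 1) / 2) := by
    intro x hx
    obtain ⟨p, hp, rfl⟩ := Finset.mem_image.mp hx
    have hp2 := (hS p hp).two_le
    have hle := S.le_max' p hp
    rw [Finset.mem_Icc]
    constructor
    · omega
    · exact Nat.div_le_div_right (by omega)
  have hcard : S.card ≤ (S.max' h + 1) / 2 := by
    calc S.card = (S.image (fun p => (p + 1) / 2)).card :=
          (Finset.card_image_of_injOn hinj).symm
      _ ≤ (Finset.Icc 1 ((S.max' h + 1) / 2)).card := Finset.card_le_card himg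
      _ = (S.max' h + 1) / 2 := by rw [Nat.card_Icc]; omega
  omega

lemma prod_primes_ge : ∀ (k : ℕ) (S : Finset ℕ), S.card = k → (∀ p ∈ S, Nat.Prime p) →
    S.Nonempty → 1 / (2 * Real.sqrt (2 * (S.card : ℝ) - 1)) ≤ ∏ p ∈ S, (1 - 1 / (p : ℝ)) := by
  intro k
  induction k with
  | zero =>
    intro S hcard _ hne
    rw [Finset.card_eq_zero] at hcard
    simp [hcard] at hne
  | succ k ih =>
    intro S hcard hS hne
    classical
    set q := S.max' hne with hq_def
    have hqmem : q ∈ S := S.max'_mem hne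
    have hq : q.Prime := hS q hqmem
    have hq2 := hq.two_le
    have h2q : 2 * S.card ≤ q + 1 := prime_max_ge S hS hne
    have hSq : S = insert q (S.erase q) := (Finset.insert_erase hqmem).symm
    have hprod : ∏ p ∈ S, (1 - 1 / (p : ℝ)) =
        (1 - 1 / (q : ℝ)) * ∏ p ∈ S.erase q, (1 - 1 / (p : ℝ)) := by
      conv_lhs => rw [hSq]
      rw [Finset.prod_insert (Finset.notMem_erase _ _)]
    have hecard : (S.erase q).card = k := by
      rw [Finset.card_erase_of_mem hqmem, hcard]
      omega
    rcases Nat.eq_zero_or_pos k with hk | hk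
    · -- S = {q}, card 1
      subst hk
      have : S.erase q = ∅ := Finset.card_eq_zero.mp hecard
      rw [hprod, this, Finset.prod_empty, mul_one, hcard]
      have : Real.sqrt (2 * ((1 : ℕ) : ℝ) - 1) = 1 := by
        norm_num
      rw [this]
      have hinv : (q:ℝ)⁻¹ ≤ 1/2 := by
        rw [inv_eq_one_div]
        apply one_div_le_one_div_of_le <;> [norm_num; exact_mod_cast hq2]
      norm_num
      linarith
    · have hene : (S.erase q).Nonempty := Finset.card_pos.mp (by omega)
      have hIH := ih (S.erase q) hecard (fun p hp => hS p (Finset.mem_of_mem_erase hp)) hene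
      rw [hecard] at hIH
      have hqk : 2 * k + 1 ≤ q := by omega
      set K := (k : ℝ) with hK_def
      have hK1 : (1:ℝ) ≤ K := by rw [hK_def]; exact_mod_cast hk
      set a := Real.sqrt (2 * K - 1) with ha_def
      set b := Real.sqrt (2 * K + 1) with hb_def
      have ha2 : a ^ 2 = 2 * K - 1 := Real.sq_sqrt (by linarith)
      have hb2 : b ^ 2 = 2 * K + 1 := Real.sq_sqrt (by linarith)
      have ha1 : 1 ≤ a := by
        have := Real.sqrt_le_sqrt (show (1:ℝ) ≤ 2 * K - 1 by linarith)
        rwa [Real.sqrt_one] at this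
      have hb1 : 1 ≤ b := by
        have := Real.sqrt_le_sqrt (show (1:ℝ) ≤ 2 * K + 1 by linarith)
        rwa [Real.sqrt_one] at this
      -- key: (2K+1) * a ≤ 2K * b
      have hkey : (2 * K + 1) * a ≤ 2 * K * b := by
        have h1 : ((2 * K + 1) * a) ^ 2 ≤ (2 * K * b) ^ 2 := by
          rw [mul_pow, mul_pow, ha2, hb2]
          nlinarith
        have h2 : (0:ℝ) ≤ (2 * K + 1) * a := by positivity
        have h3 : (0:ℝ) ≤ 2 * K * b := by positivity
        nlinarith
      have hq_real : (2 * K + 1) ≤ (q : ℝ) := by rw [hK_def]; exact_mod_cast hqk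
      have hq_pos : (0:ℝ) < q := by positivity
      have hstep : 1 - 1 / (2 * K + 1) ≤ 1 - 1 / (q : ℝ) := by
        have : 1 / (q:ℝ) ≤ 1 / (2 * K + 1) := by
          apply one_div_le_one_div_of_le (by linarith) hq_real
        linarith
      have hcardR : (S.card : ℝ) = K + 1 := by rw [hcard]; push_cast; ring
      rw [hprod, hcardR]
      have hgoal_sqrt : Real.sqrt (2 * (K + 1) - 1) = b := by
        rw [hb_def]; ring_nf
      rw [hgoal_sqrt]
      have hIH_pos : (0:ℝ) < 1 / (2 * a) := by positivity
      have hfac_pos : (0:ℝ) ≤ 1 - 1 / (2 * K + 1) := by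
        rw [sub_nonneg]
        apply div_le_one_of_le₀ <;> linarith
      calc 1 / (2 * b) ≤ (1 - 1 / (2 * K + 1)) * (1 / (2 * a)) := by
            rw [div_le_iff₀ (by positivity)]
            have ha_pos : (0:ℝ) < a := by linarith
            field_simp
            nlinarith [hkey]
        _ ≤ (1 - 1 / (q : ℝ)) * ∏ p ∈ S.erase q, (1 - 1 / (p : ℝ)) := by
            apply mul_le_mul hstep hIH (le_of_lt hIH_pos) (by linarith)


lemma even_powerset_card {α : Type*} [DecidableEq α] (S : Finset α) (h : S.Nonempty) :
    2 * (S.powerset.filter fun T => Even T.card).card = 2 ^ S.card := by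
  classical
  have hsum : ∑ T ∈ S.powerset, (-1:ℤ) ^ T.card = 0 :=
    Finset.sum_powerset_neg_one_pow_card_of_nonempty h
  rw [← Finset.sum_filter_add_sum_filter_not S.powerset (fun T => Even T.card)] at hsum
  have h1 : ∑ T ∈ S.powerset.filter (fun T => Even T.card), (-1:ℤ) ^ T.card =
      ((S.powerset.filter fun T => Even T.card).card : ℤ) := by
    rw [Finset.sum_congr rfl (fun T hT => Even.neg_one_pow (Finset.mem_filter.mp hT).2),
      Finset.sum_const, nsmul_eq_mul, mul_one]
  have h2 : ∑ T ∈ S.powerset.filter (fun T => ¬ Even T.card), (-1:ℤ) ^ T.card =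
      -((S.powerset.filter fun T => ¬ Even T.card).card : ℤ) := by
    rw [Finset.sum_congr rfl (fun T hT =>
      Odd.neg_one_pow (Nat.not_even_iff_odd.mp (Finset.mem_filter.mp hT).2)),
      Finset.sum_const, nsmul_eq_mul, mul_neg_one]
  rw [h1, h2] at hsum
  have hcards : (S.powerset.filter fun T => Even T.card).card +
      (S.powerset.filter fun T => ¬ Even T.card).card = 2 ^ S.card := by
    rw [Finset.card_filter_add_card_filter_not, Finset.card_powerset]
  omega

lemma legendre_lower (m n : ℕ) (hn : 0 < n) (hne : n.primeFactors.Nonempty) :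
    (m : ℝ) * (Nat.totient n) / n - ((2:ℝ) ^ n.primeFactors.card / 2 - 1) ≤ (legendrePhi m n : ℝ) := by
  classical
  set S := n.primeFactors with hS_def
  have hA : ((((Finset.Icc 1 m).filter fun a => Nat.Coprime a n).card : ℝ)) =
      ∑ T ∈ S.powerset, (-1:ℝ) ^ T.card * ((m / ∏ p ∈ T, p : ℕ) : ℝ) := by
    have h2 := congrArg (Int.cast : ℤ → ℝ) (legendre_eq m n hn)
    simp only [Int.cast_sum, Int.cast_mul, Int.cast_pow, Int.cast_neg, Int.cast_one,
      Int.cast_natCast] at h2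
    exact h2
  have hterm : ∀ T ∈ S.powerset,
      ((-1:ℝ) ^ T.card * ((m:ℝ) / ((∏ p ∈ T, p : ℕ) : ℝ)) -
        (if Even T.card ∧ T ≠ ∅ then (1:ℝ) else 0)) ≤
      (-1:ℝ) ^ T.card * ((m / ∏ p ∈ T, p : ℕ) : ℝ) := by
    intro T hT
    by_cases hTe : T = ∅
    · subst hTe
      simp
    have hprim : ∀ p ∈ T, Nat.Prime p := fun p hp =>
      Nat.prime_of_mem_primeFactors ((Finset.mem_powerset.mp hT) hp)
    have hd0 : 0 < ∏ p ∈ T, p := Finset.prod_pos fun p hp => (hprim p hp).pos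
    set d : ℕ := ∏ p ∈ T, p with hd_def
    have hdR : (0:ℝ) < (d : ℝ) := by exact_mod_cast hd0
    rcases Nat.even_or_odd T.card with hev | hod
    · rw [if_pos ⟨hev, hTe⟩, hev.neg_one_pow, one_mul, one_mul]
      have hlt : (m:ℝ) < (d:ℝ) * ((m / d : ℕ) : ℝ) + d := by
        have h1 := Nat.div_add_mod m d
        have h2 := Nat.mod_lt m hd0
        have he : (m:ℝ) = (d:ℝ) * ((m / d : ℕ) : ℝ) + ((m % d : ℕ) : ℝ) := by
          exact_mod_cast h1.symm
        have hl : ((m % d : ℕ) : ℝ) < d := by exact_mod_cast h2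
        linarith
      have hdiv : (m:ℝ) / d < ((m / d : ℕ) : ℝ) + 1 := by
        rw [div_lt_iff₀ hdR]
        nlinarith
      linarith
    · rw [if_neg (by simp [Nat.not_even_iff_odd.mpr hod]), hod.neg_one_pow, sub_zero,
        neg_one_mul, neg_one_mul, neg_le_neg_iff]
      exact Nat.cast_div_le
  have hsum_le : ∑ T ∈ S.powerset,
      ((-1:ℝ) ^ T.card * ((m:ℝ) / ((∏ p ∈ T, p : ℕ) : ℝ)) -
        (if Even T.card ∧ T ≠ ∅ then (1:ℝ) else 0)) ≤
      ∑ T ∈ S.powerset, (-1:ℝ) ^ T.card * ((m / ∏ p ∈ T, p : ℕ) : ℝ) :=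
    Finset.sum_le_sum hterm
  rw [Finset.sum_sub_distrib] at hsum_le
  -- the ite sum
  have hite : ∑ T ∈ S.powerset, (if Even T.card ∧ T ≠ ∅ then (1:ℝ) else 0) =
      (2:ℝ) ^ S.card / 2 - 1 := by
    rw [← Finset.sum_filter, Finset.sum_const, nsmul_eq_mul, mul_one]
    have hfe : S.powerset.filter (fun T => Even T.card ∧ T ≠ ∅) =
        (S.powerset.filter fun T => Even T.card).erase ∅ := by
      ext T
      simp only [Finset.mem_erase, Finset.mem_filter]
      tauto
    have hmem : ∅ ∈ S.powerset.filter (fun T => Even T.card) := by simp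
    have hc := even_powerset_card S hne
    have hpos : 0 < (S.powerset.filter fun T => Even T.card).card :=
      Finset.card_pos.mpr ⟨∅, hmem⟩
    have hcR : ((S.powerset.filter fun T => Even T.card).card : ℝ) = 2 ^ S.card / 2 := by
      have := congrArg (Nat.cast : ℕ → ℝ) hc
      push_cast at this
      linarith
    rw [hfe, Finset.card_erase_of_mem hmem,
      Nat.cast_sub (Nat.one_le_iff_ne_zero.mpr hpos.ne'), Nat.cast_one, hcR]
  -- the main sum equals m * φ(n)/n
  have hmain : ∑ T ∈ S.powerset, (-1:ℝ) ^ T.card * ((m:ℝ) / ((∏ p ∈ T, p : ℕ) : ℝ)) =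
      (m : ℝ) * (Nat.totient n) / n := by
    have hphi : ∏ p ∈ S, (1 - (p:ℝ)⁻¹) = (Nat.totient n : ℝ) / n := by
      have hq := Nat.totient_eq_mul_prod_factors n
      have hq2 := congrArg (Rat.cast : ℚ → ℝ) hq
      push_cast at hq2
      have hn0 : ((n:ℝ)) ≠ 0 := by positivity
      rw [hq2]
      field_simp
      rfl
    calc ∑ T ∈ S.powerset, (-1:ℝ) ^ T.card * ((m:ℝ) / ((∏ p ∈ T, p : ℕ) : ℝ))
        = (m:ℝ) * ∑ T ∈ S.powerset, ∏ p ∈ T, (-(p:ℝ)⁻¹) := by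
          rw [Finset.mul_sum]
          refine Finset.sum_congr rfl fun T hT => ?_
          have hP : ((∏ p ∈ T, p : ℕ) : ℝ) = ∏ p ∈ T, (p:ℝ) := by push_cast; rfl
          have hneg : ∏ p ∈ T, (-(p:ℝ)⁻¹) = (-1:ℝ) ^ T.card * (∏ p ∈ T, (p:ℝ))⁻¹ := by
            rw [← Finset.prod_inv_distrib, ← Finset.prod_const, ← Finset.prod_mul_distrib]
            exact Finset.prod_congr rfl fun p _ => by ring
          rw [hP, hneg]
          ring
      _ = (m:ℝ) * ∏ p ∈ S, (1 - (p:ℝ)⁻¹) := by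
          congr 1
          have hpa := Finset.prod_add (fun p : ℕ => -(p:ℝ)⁻¹) (fun _ : ℕ => (1:ℝ)) S
          simp only [Finset.prod_const_one, mul_one] at hpa
          rw [← hpa]
          exact Finset.prod_congr rfl fun p _ => by ring
      _ = (m : ℝ) * (Nat.totient n) / n := by
          rw [hphi]
          ring
  rw [hite, hmain] at hsum_le
  rw [legendrePhi, ← hA] at *
  exact hsum_le

theorem stmt13 (n s t : ℕ) (hn : 0 < n)
    (hs : n.primeFactors.card = s) (h2 : 2 ≤ s) (ht : 0 < t)
    (hbound : (t : ℝ) ≤ ((n : ℝ) + 1) / (2 ^ (s + 1) * Real.sqrt (2 * s - 1) + 1)) :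
    (Nat.totient n : ℝ) / (2.2 * t) ≤ (legendrePhi (n / t) n : ℝ) := by
  classical
  have hne : n.primeFactors.Nonempty := Finset.card_pos.mp (by omega)
  have hsR : (2:ℝ) ≤ (s:ℝ) := by exact_mod_cast h2
  have hN : (0:ℝ) < n := by exact_mod_cast hn
  have hT0 : (0:ℝ) < t := by exact_mod_cast ht
  have hT1 : (1:ℝ) ≤ t := by exact_mod_cast ht
  set r := Real.sqrt (2 * (s:ℝ) - 1) with hr_def
  have hr1 : (1:ℝ) ≤ r := by
    have := Real.sqrt_le_sqrt (show (1:ℝ) ≤ 2 * (s:ℝ) - 1 by linarith)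
    rwa [Real.sqrt_one] at this
  set k := (2:ℝ) ^ s with hk_def
  have hk4 : (4:ℝ) ≤ k := by
    rw [hk_def, show (4:ℝ) = 2 ^ 2 by norm_num]
    exact pow_le_pow_right₀ one_le_two h2
  -- φ(n)/n bounds
  have hphi : ∏ p ∈ n.primeFactors, (1 - 1 / (p:ℝ)) = (Nat.totient n : ℝ) / n := by
    have hq := Nat.totient_eq_mul_prod_factors n
    have hq2 := congrArg (Rat.cast : ℚ → ℝ) hq
    push_cast at hq2
    rw [show ∏ p ∈ n.primeFactors, (1 - 1 / (p:ℝ)) =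
        ∏ p ∈ n.primeFactors, (1 - (p:ℝ)⁻¹) from
      Finset.prod_congr rfl fun p _ => by rw [one_div], hq2]
    field_simp
  set x := (Nat.totient n : ℝ) / n with hx_def
  have hx_lb : 1 / (2 * r) ≤ x := by
    have := prod_primes_ge n.primeFactors.card n.primeFactors rfl
      (fun p hp => Nat.prime_of_mem_primeFactors hp) hne
    rw [hphi, hs] at this
    exact this
  have hx0 : 0 ≤ x := by positivity
  have hx1 : x ≤ 1 := by
    rw [hx_def, div_le_one hN]
    exact_mod_cast Nat.totient_le n
  set u := (n:ℝ) / t with hu_def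
  have hu : 2 * k * r ≤ u := by
    have hden : (0:ℝ) < 2 ^ (s+1) * r + 1 := by positivity
    rw [le_div_iff₀ hden] at hbound
    rw [hu_def, le_div_iff₀ hT0]
    have h2s1 : (2:ℝ) ^ (s+1) = 2 * k := by rw [hk_def, pow_succ]; ring
    nlinarith [hbound]
  -- lower bound for the count
  have hkey := legendre_lower (n / t) n hn hne
  rw [hs] at hkey
  have hm : u - 1 ≤ ((n / t : ℕ) : ℝ) := by
    have h1 := Nat.div_add_mod n t
    have h2' := Nat.mod_lt n ht
    have he : (n:ℝ) = (t:ℝ) * ((n / t : ℕ) : ℝ) + ((n % t : ℕ) : ℝ) := by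
      exact_mod_cast h1.symm
    have hl : ((n % t : ℕ) : ℝ) < t := by exact_mod_cast h2'
    have hlt : (n:ℝ)/t < ((n / t : ℕ) : ℝ) + 1 := by
      rw [div_lt_iff₀ hT0]
      nlinarith
    rw [hu_def]
    linarith
  have hP : (u - 1) * x - (k / 2 - 1) ≤ (legendrePhi (n / t) n : ℝ) := by
    have hmx : (u - 1) * x ≤ ((n / t : ℕ) : ℝ) * x := mul_le_mul_of_nonneg_right hm hx0
    have : ((n / t : ℕ) : ℝ) * (Nat.totient n : ℝ) / n = ((n / t : ℕ) : ℝ) * x := by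
      rw [hx_def, mul_div_assoc]
    rw [this] at hkey
    rw [hk_def]
    linarith
  have hgoal_eq : (Nat.totient n : ℝ) / (2.2 * t) = x * u / 2.2 := by
    have hn0 : (n:ℝ) ≠ 0 := ne_of_gt hN
    have ht0 : (t:ℝ) ≠ 0 := ne_of_gt hT0
    have hxu : x * u = (Nat.totient n : ℝ) / t := by
      rw [hx_def, hu_def, div_mul_div_comm, mul_comm ((Nat.totient n : ℝ)) ((n:ℝ)),
        mul_div_mul_left _ _ hn0]
    rw [hxu]
    ring
  rw [hgoal_eq]
  have h6 : 2 * k * r * x ≤ u * x := mul_le_mul_of_nonneg_right hu hx0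
  have h7 : k * 1 ≤ k * (2 * r * x) := by
    apply mul_le_mul_of_nonneg_left _ (by linarith)
    rw [div_le_iff₀ (by positivity)] at hx_lb
    linarith
  have hux : k ≤ u * x := by nlinarith
  norm_num
  linarith
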